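/- Let S be a set of points in general position in the plane, and let a, b ∈ S be two consecutive vertices of the boundary of the convex hull of S (so all other points of S lie strictly on one side of the line through a and b). If the open halfplane containing the other points of S contains exactly 2 or exactly 3 points of S, then there exist two plane Hamiltonian paths π1, π2 on S whose set of common edges is exactly the segment ab. -/

import Mathlib

open Set
open scoped Classical

noncomputable section

/-- Points in the plane. -/
abbrev Pt : Type := ℝ × ℝ

/-- Orientation determinant of the triple `(a, b, p)`:
positive iff `p` lies strictly to the left of the directed line from `a` to `b`. -/
def det3 (a b p : Pt) : ℝ :=
  (b.1 - a.1) * (p.2 - a.2) - (b.2 - a.2) * (p.1 - a.1)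

/-- A finite point set is in general position if no three of its points are collinear. -/
def GenPos (S : Finset Pt) : Prop :=
  ∀ p ∈ S, ∀ q ∈ S, ∀ r ∈ S,
    p ≠ q → p ≠ r → q ≠ r → ¬ Collinear ℝ ({p, q, r} : Set Pt)

/-- The list of (directed) edges of a polygonal path given by its list of vertices. -/
def edgeList (l : List Pt) : List (Pt × Pt) := l.zip l.tail

/-- The segment `ab` is an edge of the path `l`, i.e. `a` and `b` are consecutive on `l`. -/
def IsEdgeOf (a b : Pt) (l : List Pt) : Prop :=
  (a, b) ∈ edgeList l ∨ (b, a) ∈ edgeList l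

/-- `l` is a plane (crossing-free) Hamiltonian path on the point set `S`:
its vertices are exactly the points of `S`, each visited once, and any two distinct
edges intersect only in common endpoints. -/
def PlanePath (S : Finset Pt) (l : List Pt) : Prop :=
  l.Nodup ∧ l.toFinset = S ∧
  ∀ e ∈ edgeList l, ∀ f ∈ edgeList l, e ≠ f →
    segment ℝ e.1 e.2 ∩ segment ℝ f.1 f.2 ⊆
      (({e.1, e.2} : Set Pt) ∩ ({f.1, f.2} : Set Pt))

/-- Two paths are edge-disjoint: no segment is an edge of both. -/
def EdgeDisjoint (l₁ l₂ : List Pt) : Prop :=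
  ∀ x y : Pt, IsEdgeOf x y l₁ → ¬ IsEdgeOf x y l₂

/-- `p` is a vertex of the boundary of the convex hull of `S`. -/
def HullVertex (S : Finset Pt) (p : Pt) : Prop :=
  p ∈ Set.extremePoints ℝ (convexHull ℝ (S : Set Pt))

/-- `ab` is an edge of the boundary of the convex hull of `S`, i.e. `a` and `b` are
consecutive hull vertices: all other points of `S` lie strictly on one side of line `ab`. -/
def IsHullEdge (S : Finset Pt) (a b : Pt) : Prop :=
  a ∈ S ∧ b ∈ S ∧ a ≠ b ∧
  ((∀ p ∈ S, p ≠ a → p ≠ b → 0 < det3 a b p) ∨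
   (∀ p ∈ S, p ≠ a → p ≠ b → det3 a b p < 0))

/-- The segment `xy` is a bridge over the line through `a` and `b`:
it crosses the line `ℓ(ab)` but not the segment `ab`. -/
def IsBridge (a b x y : Pt) : Prop :=
  det3 a b x * det3 a b y < 0 ∧ segment ℝ x y ∩ segment ℝ a b = ∅

/-- The set of common edges of the two paths is exactly the segment `ab`. -/
def SharesExactly (a b : Pt) (l₁ l₂ : List Pt) : Prop :=
  IsEdgeOf a b l₁ ∧ IsEdgeOf a b l₂ ∧
  ∀ x y : Pt, IsEdgeOf x y l₁ → IsEdgeOf x y l₂ → ({x, y} : Set Pt) = ({a, b} : Set Pt)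

lemma det3_rot (a b c : Pt) : det3 a b c = det3 b c a := by unfold det3; ring

lemma det3_swap (a b c : Pt) : det3 a b c = - det3 b a c := by unfold det3; ring

lemma det3_aba (a b : Pt) : det3 a b a = 0 := by unfold det3; ring

lemma det3_abb (a b : Pt) : det3 a b b = 0 := by unfold det3; ring

lemma det3_combo (a b x y : Pt) {s t : ℝ} (hst : s + t = 1) :
    det3 a b (s • x + t • y) = s * det3 a b x + t * det3 a b y := by
  have ht : t = 1 - s := by linarith
  subst ht
  simp only [det3, Prod.fst_add, Prod.snd_add, Prod.smul_fst, Prod.smul_snd, smul_eq_mul]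
  ring

lemma det3_of_mem_segment {a b x y w : Pt} (hw : w ∈ segment ℝ x y) :
    ∃ s t : ℝ, 0 ≤ s ∧ 0 ≤ t ∧ s + t = 1 ∧ det3 a b w = s * det3 a b x + t * det3 a b y := by
  obtain ⟨s, t, hs, ht, hst, rfl⟩ := hw
  exact ⟨s, t, hs, ht, hst, det3_combo a b x y hst⟩

lemma sep {u v x y : Pt} (hx : 0 < det3 u v x) (hy : 0 < det3 u v y) :
    segment ℝ x y ∩ segment ℝ u v = ∅ := by
  ext w
  simp only [Set.mem_inter_iff, Set.mem_empty_iff_false, iff_false, not_and]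
  intro h1 h2
  obtain ⟨s, t, hs, ht, hst, hd⟩ := det3_of_mem_segment (a := u) (b := v) h1
  obtain ⟨s', t', hs', ht', hst', hd'⟩ := det3_of_mem_segment (a := u) (b := v) h2
  have hzero : det3 u v w = 0 := by rw [hd', det3_aba, det3_abb]; ring
  rcases eq_or_lt_of_le hs with hs0 | hs0
  · have ht1 : t = 1 := by linarith
    rw [hzero, ← hs0, ht1] at hd; linarith
  · have h1' : 0 < s * det3 u v x := mul_pos hs0 hx
    have h2' : 0 ≤ t * det3 u v y := mul_nonneg ht hy.le
    rw [hzero] at hd; linarith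

lemma inter_empty_symm {s t : Set Pt} (h : s ∩ t = ∅) : t ∩ s = ∅ := by
  rw [Set.inter_comm]; exact h

lemma subset_of_inter_empty {s t r : Set Pt} (h : s ∩ t = ∅) : s ∩ t ⊆ r := by
  rw [h]; exact Set.empty_subset r

lemma adj {x y z : Pt} (h : det3 x y z ≠ 0) :
    segment ℝ x y ∩ segment ℝ y z ⊆ (({x, y} : Set Pt) ∩ ({y, z} : Set Pt)) := by
  rintro w ⟨h1, h2⟩
  obtain ⟨s, t, hs, ht, hst, hd⟩ := det3_of_mem_segment (a := x) (b := y) h1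
  have hw0 : det3 x y w = 0 := by rw [hd, det3_aba, det3_abb]; ring
  obtain ⟨s', t', hs', ht', hst', hw⟩ := h2
  have hw1 : det3 x y w = t' * det3 x y z := by
    rw [← hw, det3_combo x y y z hst', det3_abb]; ring
  have ht'0 : t' = 0 := by
    have h0 : t' * det3 x y z = 0 := by linarith
    rcases mul_eq_zero.1 h0 with h' | h'
    · exact h'
    · exact absurd h' h
  have hs'1 : s' = 1 := by linarith
  have hwy : w = y := by rw [← hw, ht'0, hs'1]; simp
  subst hwy
  exact ⟨Or.inr rfl, Or.inl rfl⟩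

lemma adj' {x y z : Pt} (h : det3 x y z ≠ 0) :
    segment ℝ y z ∩ segment ℝ x y ⊆ (({y, z} : Set Pt) ∩ ({x, y} : Set Pt)) := by
  rintro w hw
  have h2 := adj h ⟨hw.2, hw.1⟩
  exact ⟨h2.2, h2.1⟩

lemma collinear_of_det3 {p q r : Pt} (hpq : p ≠ q) (h : det3 p q r = 0) :
    Collinear ℝ ({p, q, r} : Set Pt) := by
  rw [collinear_iff_of_mem (Set.mem_insert p _)]
  refine ⟨q - p, ?_⟩
  intro x hx
  rcases hx with rfl | hx
  · exact ⟨0, by simp⟩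
  rcases hx with rfl | hx
  · exact ⟨1, by simp⟩
  rw [Set.mem_singleton_iff] at hx; subst hx
  unfold det3 at h
  by_cases h1 : q.1 - p.1 = 0
  · have h2 : q.2 - p.2 ≠ 0 := by
      intro hc
      exact hpq (Prod.ext (by linarith) (by linarith))
    refine ⟨(x.2 - p.2) / (q.2 - p.2), ?_⟩
    have hx1 : x.1 = p.1 := by
      have h3 : (q.2 - p.2) * (x.1 - p.1) = 0 := by
        have h4 := mul_eq_zero_of_left h1 (x.2 - p.2)
        linarith
      rcases mul_eq_zero.1 h3 with h' | h'
      · exact absurd h' h2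
      · linarith
    apply Prod.ext
    · simp only [vadd_eq_add, Prod.fst_add, Prod.smul_fst, Prod.fst_sub, smul_eq_mul]
      rw [hx1, h1]; ring
    · simp only [vadd_eq_add, Prod.snd_add, Prod.smul_snd, Prod.snd_sub, smul_eq_mul]
      field_simp
      ring
  · refine ⟨(x.1 - p.1) / (q.1 - p.1), ?_⟩
    apply Prod.ext
    · simp only [vadd_eq_add, Prod.fst_add, Prod.smul_fst, Prod.fst_sub, smul_eq_mul]
      field_simp
      ring
    · simp only [vadd_eq_add, Prod.snd_add, Prod.smul_snd, Prod.snd_sub, smul_eq_mul]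
      field_simp
      nlinarith [h]

lemma gp_ne {S : Finset Pt} (hgp : GenPos S) {p q r : Pt}
    (hp : p ∈ S) (hq : q ∈ S) (hr : r ∈ S)
    (hpq : p ≠ q) (hpr : p ≠ r) (hqr : q ≠ r) : det3 p q r ≠ 0 :=
  fun h0 => hgp p hp q hq r hr hpq hpr hqr (collinear_of_det3 hpq h0)

lemma det3_trans {a b x y z : Pt} (hbx : 0 < det3 a b x) (hby : 0 < det3 a b y)
    (hbz : 0 < det3 a b z) (h1 : 0 < det3 a x y) (h2 : 0 < det3 a y z) :
    0 < det3 a x z := by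
  have key : det3 a x z * det3 a b y = det3 a x y * det3 a b z + det3 a y z * det3 a b x := by
    unfold det3; ring
  nlinarith [mul_pos h1 hbz, mul_pos h2 hbx]

lemma edgeList5 (v1 v2 v3 v4 v5 : Pt) :
    edgeList [v1, v2, v3, v4, v5] = [(v1, v2), (v2, v3), (v3, v4), (v4, v5)] := rfl

lemma edgeList4 (v1 v2 v3 v4 : Pt) :
    edgeList [v1, v2, v3, v4] = [(v1, v2), (v2, v3), (v3, v4)] := rfl

lemma planePath5 (S : Finset Pt) (v1 v2 v3 v4 v5 : Pt)
    (hS : S = {v1, v2, v3, v4, v5})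
    (n12 : v1 ≠ v2) (n13 : v1 ≠ v3) (n14 : v1 ≠ v4) (n15 : v1 ≠ v5)
    (n23 : v2 ≠ v3) (n24 : v2 ≠ v4) (n25 : v2 ≠ v5)
    (n34 : v3 ≠ v4) (n35 : v3 ≠ v5) (n45 : v4 ≠ v5)
    (a123 : det3 v1 v2 v3 ≠ 0) (a234 : det3 v2 v3 v4 ≠ 0) (a345 : det3 v3 v4 v5 ≠ 0)
    (d13 : segment ℝ v1 v2 ∩ segment ℝ v3 v4 = ∅)
    (d14 : segment ℝ v1 v2 ∩ segment ℝ v4 v5 = ∅)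
    (d24 : segment ℝ v2 v3 ∩ segment ℝ v4 v5 = ∅) :
    PlanePath S [v1, v2, v3, v4, v5] := by
  refine ⟨?_, ?_, ?_⟩
  · simp [n12, n13, n14, n15, n23, n24, n25, n34, n35, n45]
  · rw [hS]; ext x; simp
  · intro e he f hf hef
    rw [edgeList5] at he hf
    simp only [List.mem_cons, List.not_mem_nil, or_false] at he hf
    rcases he with rfl | rfl | rfl | rfl
    · rcases hf with rfl | rfl | rfl | rfl
      · exact absurd rfl hef
      · exact adj a123
      · exact subset_of_inter_empty d13
      · exact subset_of_inter_empty d14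
    · rcases hf with rfl | rfl | rfl | rfl
      · exact adj' a123
      · exact absurd rfl hef
      · exact adj a234
      · exact subset_of_inter_empty d24
    · rcases hf with rfl | rfl | rfl | rfl
      · exact subset_of_inter_empty (inter_empty_symm d13)
      · exact adj' a234
      · exact absurd rfl hef
      · exact adj a345
    · rcases hf with rfl | rfl | rfl | rfl
      · exact subset_of_inter_empty (inter_empty_symm d14)
      · exact subset_of_inter_empty (inter_empty_symm d24)
      · exact adj' a345
      · exact absurd rfl hef

lemma planePath4 (S : Finset Pt) (v1 v2 v3 v4 : Pt)
    (hS : S = {v1, v2, v3, v4})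
    (n12 : v1 ≠ v2) (n13 : v1 ≠ v3) (n14 : v1 ≠ v4)
    (n23 : v2 ≠ v3) (n24 : v2 ≠ v4) (n34 : v3 ≠ v4)
    (a123 : det3 v1 v2 v3 ≠ 0) (a234 : det3 v2 v3 v4 ≠ 0)
    (d13 : segment ℝ v1 v2 ∩ segment ℝ v3 v4 = ∅) :
    PlanePath S [v1, v2, v3, v4] := by
  refine ⟨?_, ?_, ?_⟩
  · simp [n12, n13, n14, n23, n24, n34]
  · rw [hS]; ext x; simp
  · intro e he f hf hef
    rw [edgeList4] at he hf
    simp only [List.mem_cons, List.not_mem_nil, or_false] at he hf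
    rcases he with rfl | rfl | rfl
    · rcases hf with rfl | rfl | rfl
      · exact absurd rfl hef
      · exact adj a123
      · exact subset_of_inter_empty d13
    · rcases hf with rfl | rfl | rfl
      · exact adj' a123
      · exact absurd rfl hef
      · exact adj a234
    · rcases hf with rfl | rfl | rfl
      · exact subset_of_inter_empty (inter_empty_symm d13)
      · exact adj' a234
      · exact absurd rfl hef

lemma case4sorted (S : Finset Pt) (a b c d : Pt) (hS : S = {a, b, c, d})
    (hgp : GenPos S)
    (nab : a ≠ b) (nac : a ≠ c) (nad : a ≠ d) (nbc : b ≠ c) (nbd : b ≠ d) (ncd : c ≠ d)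
    (hc : 0 < det3 a b c) (hd : 0 < det3 a b d)
    (hacd : det3 a c d < 0) :
    ∃ l₁ l₂ : List Pt, PlanePath S l₁ ∧ PlanePath S l₂ ∧ SharesExactly a b l₁ l₂ := by
  have haS : a ∈ S := by rw [hS]; simp
  have hbS : b ∈ S := by rw [hS]; simp
  have hcS : c ∈ S := by rw [hS]; simp
  have hdS : d ∈ S := by rw [hS]; simp
  refine ⟨[c, a, b, d], [c, d, a, b], ?_, ?_, ?_, ?_, ?_⟩
  · refine planePath4 S c a b d ?_ nac.symm nbc.symm ncd nab nad nbd
      (gp_ne hgp hcS haS hbS nac.symm nbc.symm nab) (gp_ne hgp haS hbS hdS nab nad nbd) ?_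
    · rw [hS]; ext x; simp; tauto
    · -- segment c a ∩ segment b d = ∅ ; separating line (c, a)
      rw [Set.inter_comm]
      have h1 : 0 < det3 c a b := by
        have e : det3 c a b = det3 a b c := by unfold det3; ring
        rw [e]; exact hc
      have h2 : 0 < det3 c a d := by
        have : det3 c a d = - det3 a c d := by rw [det3_swap]
        rw [this]; linarith
      exact sep h1 h2
  · refine planePath4 S c d a b ?_ ncd nac.symm nbc.symm nad.symm nbd.symm nab
      (gp_ne hgp hcS hdS haS ncd nac.symm nad.symm) (gp_ne hgp hdS haS hbS nad.symm nbd.symm nab) ?_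
    · rw [hS]; ext x; simp; tauto
    · exact sep hc hd
  · left; rw [edgeList4]; simp
  · left; rw [edgeList4]; simp
  · intro x y h1 h2
    unfold IsEdgeOf at h1 h2
    rw [edgeList4] at h1 h2
    simp only [List.mem_cons, List.not_mem_nil, or_false, Prod.mk.injEq] at h1 h2
    rcases h1 with (⟨rfl, rfl⟩ | ⟨rfl, rfl⟩ | ⟨rfl, rfl⟩) | (⟨rfl, rfl⟩ | ⟨rfl, rfl⟩ | ⟨rfl, rfl⟩)
    · simp [nab, nac, nad, nbc, nbd, ncd, nab.symm, nac.symm, nad.symm, nbc.symm, nbd.symm,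
        ncd.symm] at h2
    · rfl
    · simp [nab, nac, nad, nbc, nbd, ncd, nab.symm, nac.symm, nad.symm, nbc.symm, nbd.symm,
        ncd.symm] at h2
    · simp [nab, nac, nad, nbc, nbd, ncd, nab.symm, nac.symm, nad.symm, nbc.symm, nbd.symm,
        ncd.symm] at h2
    · exact Set.pair_comm _ _
    · simp [nab, nac, nad, nbc, nbd, ncd, nab.symm, nac.symm, nad.symm, nbc.symm, nbd.symm,
        ncd.symm] at h2

lemma case4 (S : Finset Pt) (a b c d : Pt) (hS : S = {a, b, c, d})
    (hgp : GenPos S)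
    (nab : a ≠ b) (nac : a ≠ c) (nad : a ≠ d) (nbc : b ≠ c) (nbd : b ≠ d) (ncd : c ≠ d)
    (hc : 0 < det3 a b c) (hd : 0 < det3 a b d) :
    ∃ l₁ l₂ : List Pt, PlanePath S l₁ ∧ PlanePath S l₂ ∧ SharesExactly a b l₁ l₂ := by
  have haS : a ∈ S := by rw [hS]; simp
  have hcS : c ∈ S := by rw [hS]; simp
  have hdS : d ∈ S := by rw [hS]; simp
  have hne : det3 a c d ≠ 0 := gp_ne hgp haS hcS hdS nac nad ncd
  rcases lt_or_gt_of_ne hne with h | h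
  · exact case4sorted S a b c d hS hgp nab nac nad nbc nbd ncd hc hd h
  · refine case4sorted S a b d c ?_ hgp nab nad nac nbd nbc ncd.symm hd hc ?_
    · rw [hS]; ext x; simp; tauto
    · have e : det3 a d c = - det3 a c d := by unfold det3; ring
      rw [e]; linarith

lemma seg_comm (x y : Pt) : segment ℝ x y = segment ℝ y x := segment_symm ℝ x y

section Case5
variable (S : Finset Pt) (a b p1 p2 p3 : Pt)

lemma case5A (hS : S = {a, b, p1, p2, p3}) (hgp : GenPos S)
    (nab : a ≠ b) (na1 : a ≠ p1) (na2 : a ≠ p2) (na3 : a ≠ p3)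
    (nb1 : b ≠ p1) (nb2 : b ≠ p2) (nb3 : b ≠ p3)
    (n12 : p1 ≠ p2) (n13 : p1 ≠ p3) (n23 : p2 ≠ p3)
    (hb1 : 0 < det3 a b p1) (hb2 : 0 < det3 a b p2) (hb3 : 0 < det3 a b p3)
    (h12 : 0 < det3 a p1 p2) (h23 : 0 < det3 a p2 p3) (h13 : 0 < det3 a p1 p3)
    (hA : 0 < det3 p1 p3 p2) :
    ∃ l₁ l₂ : List Pt, PlanePath S l₁ ∧ PlanePath S l₂ ∧ SharesExactly a b l₁ l₂ := by
  have haS : a ∈ S := by rw [hS]; simp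
  have hbS : b ∈ S := by rw [hS]; simp
  have h1S : p1 ∈ S := by rw [hS]; simp
  have h2S : p2 ∈ S := by rw [hS]; simp
  have h3S : p3 ∈ S := by rw [hS]; simp
  refine ⟨[b, a, p1, p2, p3], [p2, a, b, p1, p3], ?_, ?_, ?_, ?_, ?_⟩
  · refine planePath5 S b a p1 p2 p3 ?_ nab.symm nb1 nb2 nb3 na1 na2 na3 n12 n13 n23
      (gp_ne hgp hbS haS h1S nab.symm nb1 na1)
      (gp_ne hgp haS h1S h2S na1 na2 n12)
      (gp_ne hgp h1S h2S h3S n12 n13 n23) ?_ ?_ ?_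
    · rw [hS]; ext x; simp; tauto
    · rw [seg_comm b a, Set.inter_comm]; exact sep hb1 hb2
    · rw [seg_comm b a, Set.inter_comm]; exact sep hb2 hb3
    · rw [Set.inter_comm]; exact sep h12 h13
  · refine planePath5 S p2 a b p1 p3 ?_ na2.symm nb2.symm n12.symm n23 nab na1 na3 nb1 nb3 n13
      (gp_ne hgp h2S haS hbS na2.symm nb2.symm nab)
      (gp_ne hgp haS hbS h1S nab na1 nb1)
      (gp_ne hgp hbS h1S h3S nb1 nb3 n13) ?_ ?_ ?_
    · rw [hS]; ext x; simp; tauto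
    · -- segment p2 a ∩ segment b p1 = ∅, line (p2, a)
      rw [Set.inter_comm]
      have e1 : 0 < det3 p2 a b := by unfold det3 at hb2 ⊢; linarith
      have e2 : 0 < det3 p2 a p1 := by unfold det3 at h12 ⊢; linarith
      exact sep e1 e2
    · -- segment p2 a ∩ segment p1 p3 = ∅, line (p1, p3)
      have e1 : 0 < det3 p1 p3 a := by unfold det3 at h13 ⊢; linarith
      exact sep hA e1
    · rw [Set.inter_comm]; exact sep hb1 hb3
  · right; rw [edgeList5]; simp
  · left; rw [edgeList5]; simp
  · intro x y h1 h2
    unfold IsEdgeOf at h1 h2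
    rw [edgeList5] at h1 h2
    simp only [List.mem_cons, List.not_mem_nil, or_false, Prod.mk.injEq] at h1 h2
    rcases h1 with (⟨rfl, rfl⟩ | ⟨rfl, rfl⟩ | ⟨rfl, rfl⟩ | ⟨rfl, rfl⟩) |
      (⟨rfl, rfl⟩ | ⟨rfl, rfl⟩ | ⟨rfl, rfl⟩ | ⟨rfl, rfl⟩)
    · exact Set.pair_comm _ _
    · simp [nab, na1, na2, na3, nb1, nb2, nb3, n12, n13, n23, nab.symm, na1.symm, na2.symm,
        na3.symm, nb1.symm, nb2.symm, nb3.symm, n12.symm, n13.symm, n23.symm] at h2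
    · simp [nab, na1, na2, na3, nb1, nb2, nb3, n12, n13, n23, nab.symm, na1.symm, na2.symm,
        na3.symm, nb1.symm, nb2.symm, nb3.symm, n12.symm, n13.symm, n23.symm] at h2
    · simp [nab, na1, na2, na3, nb1, nb2, nb3, n12, n13, n23, nab.symm, na1.symm, na2.symm,
        na3.symm, nb1.symm, nb2.symm, nb3.symm, n12.symm, n13.symm, n23.symm] at h2
    · rfl
    · simp [nab, na1, na2, na3, nb1, nb2, nb3, n12, n13, n23, nab.symm, na1.symm, na2.symm,
        na3.symm, nb1.symm, nb2.symm, nb3.symm, n12.symm, n13.symm, n23.symm] at h2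
    · simp [nab, na1, na2, na3, nb1, nb2, nb3, n12, n13, n23, nab.symm, na1.symm, na2.symm,
        na3.symm, nb1.symm, nb2.symm, nb3.symm, n12.symm, n13.symm, n23.symm] at h2
    · simp [nab, na1, na2, na3, nb1, nb2, nb3, n12, n13, n23, nab.symm, na1.symm, na2.symm,
        na3.symm, nb1.symm, nb2.symm, nb3.symm, n12.symm, n13.symm, n23.symm] at h2

lemma case5B1 (hS : S = {a, b, p1, p2, p3}) (hgp : GenPos S)
    (nab : a ≠ b) (na1 : a ≠ p1) (na2 : a ≠ p2) (na3 : a ≠ p3)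
    (nb1 : b ≠ p1) (nb2 : b ≠ p2) (nb3 : b ≠ p3)
    (n12 : p1 ≠ p2) (n13 : p1 ≠ p3) (n23 : p2 ≠ p3)
    (hb1 : 0 < det3 a b p1) (hb2 : 0 < det3 a b p2) (hb3 : 0 < det3 a b p3)
    (h12 : 0 < det3 a p1 p2) (h23 : 0 < det3 a p2 p3) (h13 : 0 < det3 a p1 p3)
    (hp2n : det3 p1 p3 p2 < 0) (hbn : det3 p1 p3 b < 0) :
    ∃ l₁ l₂ : List Pt, PlanePath S l₁ ∧ PlanePath S l₂ ∧ SharesExactly a b l₁ l₂ := by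
  have haS : a ∈ S := by rw [hS]; simp
  have hbS : b ∈ S := by rw [hS]; simp
  have h1S : p1 ∈ S := by rw [hS]; simp
  have h2S : p2 ∈ S := by rw [hS]; simp
  have h3S : p3 ∈ S := by rw [hS]; simp
  refine ⟨[a, b, p2, p1, p3], [p1, a, b, p3, p2], ?_, ?_, ?_, ?_, ?_⟩
  · refine planePath5 S a b p2 p1 p3 ?_ nab na2 na1 na3 nb2 nb1 nb3 n12.symm n23 n13
      (gp_ne hgp haS hbS h2S nab na2 nb2)
      (gp_ne hgp hbS h2S h1S nb2 nb1 n12.symm)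
      (gp_ne hgp h2S h1S h3S n12.symm n23 n13) ?_ ?_ ?_
    · rw [hS]; ext x; simp; tauto
    · rw [Set.inter_comm]; exact sep hb2 hb1
    · rw [Set.inter_comm]; exact sep hb1 hb3
    · -- segment b p2 ∩ segment p1 p3 = ∅, line (p3, p1)
      rw [seg_comm p1 p3]
      have e1 : 0 < det3 p3 p1 b := by unfold det3 at hbn ⊢; linarith
      have e2 : 0 < det3 p3 p1 p2 := by unfold det3 at hp2n ⊢; linarith
      exact sep e1 e2
  · refine planePath5 S p1 a b p3 p2 ?_ na1.symm nb1.symm n13 n12 nab na3 na2 nb3 nb2 n23.symm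
      (gp_ne hgp h1S haS hbS na1.symm nb1.symm nab)
      (gp_ne hgp haS hbS h3S nab na3 nb3)
      (gp_ne hgp hbS h3S h2S nb3 nb2 n23.symm) ?_ ?_ ?_
    · rw [hS]; ext x; simp; tauto
    · -- segment p1 a ∩ segment b p3 = ∅, line (b, p3)
      have e1 : 0 < det3 b p3 p1 := by unfold det3 at hbn ⊢; linarith
      have e2 : 0 < det3 b p3 a := by unfold det3 at hb3 ⊢; linarith
      exact sep e1 e2
    · -- segment p1 a ∩ segment p3 p2 = ∅, line (p2, p3)
      rw [seg_comm p3 p2]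
      have e1 : 0 < det3 p2 p3 p1 := by unfold det3 at hp2n ⊢; linarith
      have e2 : 0 < det3 p2 p3 a := by unfold det3 at h23 ⊢; linarith
      exact sep e1 e2
    · rw [Set.inter_comm]; exact sep hb3 hb2
  · left; rw [edgeList5]; simp
  · left; rw [edgeList5]; simp
  · intro x y h1 h2
    unfold IsEdgeOf at h1 h2
    rw [edgeList5] at h1 h2
    simp only [List.mem_cons, List.not_mem_nil, or_false, Prod.mk.injEq] at h1 h2
    rcases h1 with (⟨rfl, rfl⟩ | ⟨rfl, rfl⟩ | ⟨rfl, rfl⟩ | ⟨rfl, rfl⟩) |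
      (⟨rfl, rfl⟩ | ⟨rfl, rfl⟩ | ⟨rfl, rfl⟩ | ⟨rfl, rfl⟩)
    · rfl
    · simp [nab, na1, na2, na3, nb1, nb2, nb3, n12, n13, n23, nab.symm, na1.symm, na2.symm,
        na3.symm, nb1.symm, nb2.symm, nb3.symm, n12.symm, n13.symm, n23.symm] at h2
    · simp [nab, na1, na2, na3, nb1, nb2, nb3, n12, n13, n23, nab.symm, na1.symm, na2.symm,
        na3.symm, nb1.symm, nb2.symm, nb3.symm, n12.symm, n13.symm, n23.symm] at h2
    · simp [nab, na1, na2, na3, nb1, nb2, nb3, n12, n13, n23, nab.symm, na1.symm, na2.symm,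
        na3.symm, nb1.symm, nb2.symm, nb3.symm, n12.symm, n13.symm, n23.symm] at h2
    · exact Set.pair_comm _ _
    · simp [nab, na1, na2, na3, nb1, nb2, nb3, n12, n13, n23, nab.symm, na1.symm, na2.symm,
        na3.symm, nb1.symm, nb2.symm, nb3.symm, n12.symm, n13.symm, n23.symm] at h2
    · simp [nab, na1, na2, na3, nb1, nb2, nb3, n12, n13, n23, nab.symm, na1.symm, na2.symm,
        na3.symm, nb1.symm, nb2.symm, nb3.symm, n12.symm, n13.symm, n23.symm] at h2
    · simp [nab, na1, na2, na3, nb1, nb2, nb3, n12, n13, n23, nab.symm, na1.symm, na2.symm,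
        na3.symm, nb1.symm, nb2.symm, nb3.symm, n12.symm, n13.symm, n23.symm] at h2

lemma case5C (hS : S = {a, b, p1, p2, p3}) (hgp : GenPos S)
    (nab : a ≠ b) (na1 : a ≠ p1) (na2 : a ≠ p2) (na3 : a ≠ p3)
    (nb1 : b ≠ p1) (nb2 : b ≠ p2) (nb3 : b ≠ p3)
    (n12 : p1 ≠ p2) (n13 : p1 ≠ p3) (n23 : p2 ≠ p3)
    (hb1 : 0 < det3 a b p1) (hb2 : 0 < det3 a b p2) (hb3 : 0 < det3 a b p3)
    (h12 : 0 < det3 a p1 p2) (h23 : 0 < det3 a p2 p3) (h13 : 0 < det3 a p1 p3)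
    (hp2n : det3 p1 p3 p2 < 0) (hbp : 0 < det3 p1 p3 b) :
    ∃ l₁ l₂ : List Pt, PlanePath S l₁ ∧ PlanePath S l₂ ∧ SharesExactly a b l₁ l₂ := by
  have haS : a ∈ S := by rw [hS]; simp
  have hbS : b ∈ S := by rw [hS]; simp
  have h1S : p1 ∈ S := by rw [hS]; simp
  have h2S : p2 ∈ S := by rw [hS]; simp
  have h3S : p3 ∈ S := by rw [hS]; simp
  refine ⟨[b, a, p1, p3, p2], [p1, p2, b, a, p3], ?_, ?_, ?_, ?_, ?_⟩
  · refine planePath5 S b a p1 p3 p2 ?_ nab.symm nb1 nb3 nb2 na1 na3 na2 n13 n12 n23.symm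
      (gp_ne hgp hbS haS h1S nab.symm nb1 na1)
      (gp_ne hgp haS h1S h3S na1 na3 n13)
      (gp_ne hgp h1S h3S h2S n13 n12 n23.symm) ?_ ?_ ?_
    · rw [hS]; ext x; simp; tauto
    · -- segment b a ∩ segment p1 p3 = ∅, line (p1, p3)
      have e1 : 0 < det3 p1 p3 a := by unfold det3 at h13 ⊢; linarith
      exact sep hbp e1
    · rw [seg_comm b a, Set.inter_comm]; exact sep hb3 hb2
    · -- segment a p1 ∩ segment p3 p2 = ∅, line (p2, p3)
      rw [seg_comm p3 p2]
      have e1 : 0 < det3 p2 p3 a := by unfold det3 at h23 ⊢; linarith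
      have e2 : 0 < det3 p2 p3 p1 := by unfold det3 at hp2n ⊢; linarith
      exact sep e1 e2
  · refine planePath5 S p1 p2 b a p3 ?_ n12 nb1.symm na1.symm n13 nb2.symm na2.symm n23 nab.symm
      nb3 na3
      (gp_ne hgp h1S h2S hbS n12 nb1.symm nb2.symm)
      (gp_ne hgp h2S hbS haS nb2.symm na2.symm nab.symm)
      (gp_ne hgp hbS haS h3S nab.symm nb3 na3) ?_ ?_ ?_
    · rw [hS]; ext x; simp; tauto
    · rw [seg_comm b a]; exact sep hb1 hb2
    · -- segment p1 p2 ∩ segment a p3 = ∅, line (p3, a)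
      rw [seg_comm a p3]
      have e1 : 0 < det3 p3 a p1 := by unfold det3 at h13 ⊢; linarith
      have e2 : 0 < det3 p3 a p2 := by unfold det3 at h23 ⊢; linarith
      exact sep e1 e2
    · -- segment p2 b ∩ segment a p3 = ∅, line (p3, a)
      rw [seg_comm a p3]
      have e1 : 0 < det3 p3 a p2 := by unfold det3 at h23 ⊢; linarith
      have e2 : 0 < det3 p3 a b := by unfold det3 at hb3 ⊢; linarith
      exact sep e1 e2
  · right; rw [edgeList5]; simp
  · right; rw [edgeList5]; simp
  · intro x y h1 h2
    unfold IsEdgeOf at h1 h2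
    rw [edgeList5] at h1 h2
    simp only [List.mem_cons, List.not_mem_nil, or_false, Prod.mk.injEq] at h1 h2
    rcases h1 with (⟨rfl, rfl⟩ | ⟨rfl, rfl⟩ | ⟨rfl, rfl⟩ | ⟨rfl, rfl⟩) |
      (⟨rfl, rfl⟩ | ⟨rfl, rfl⟩ | ⟨rfl, rfl⟩ | ⟨rfl, rfl⟩)
    · exact Set.pair_comm _ _
    · simp [nab, na1, na2, na3, nb1, nb2, nb3, n12, n13, n23, nab.symm, na1.symm, na2.symm,
        na3.symm, nb1.symm, nb2.symm, nb3.symm, n12.symm, n13.symm, n23.symm] at h2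
    · simp [nab, na1, na2, na3, nb1, nb2, nb3, n12, n13, n23, nab.symm, na1.symm, na2.symm,
        na3.symm, nb1.symm, nb2.symm, nb3.symm, n12.symm, n13.symm, n23.symm] at h2
    · simp [nab, na1, na2, na3, nb1, nb2, nb3, n12, n13, n23, nab.symm, na1.symm, na2.symm,
        na3.symm, nb1.symm, nb2.symm, nb3.symm, n12.symm, n13.symm, n23.symm] at h2
    · rfl
    · simp [nab, na1, na2, na3, nb1, nb2, nb3, n12, n13, n23, nab.symm, na1.symm, na2.symm,
        na3.symm, nb1.symm, nb2.symm, nb3.symm, n12.symm, n13.symm, n23.symm] at h2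
    · simp [nab, na1, na2, na3, nb1, nb2, nb3, n12, n13, n23, nab.symm, na1.symm, na2.symm,
        na3.symm, nb1.symm, nb2.symm, nb3.symm, n12.symm, n13.symm, n23.symm] at h2
    · simp [nab, na1, na2, na3, nb1, nb2, nb3, n12, n13, n23, nab.symm, na1.symm, na2.symm,
        na3.symm, nb1.symm, nb2.symm, nb3.symm, n12.symm, n13.symm, n23.symm] at h2


lemma case5sorted (hS : S = {a, b, p1, p2, p3}) (hgp : GenPos S)
    (nab : a ≠ b) (na1 : a ≠ p1) (na2 : a ≠ p2) (na3 : a ≠ p3)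
    (nb1 : b ≠ p1) (nb2 : b ≠ p2) (nb3 : b ≠ p3)
    (n12 : p1 ≠ p2) (n13 : p1 ≠ p3) (n23 : p2 ≠ p3)
    (hb1 : 0 < det3 a b p1) (hb2 : 0 < det3 a b p2) (hb3 : 0 < det3 a b p3)
    (h12 : 0 < det3 a p1 p2) (h23 : 0 < det3 a p2 p3) (h13 : 0 < det3 a p1 p3) :
    ∃ l₁ l₂ : List Pt, PlanePath S l₁ ∧ PlanePath S l₂ ∧ SharesExactly a b l₁ l₂ := by
  have haS : a ∈ S := by rw [hS]; simp
  have hbS : b ∈ S := by rw [hS]; simp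
  have h1S : p1 ∈ S := by rw [hS]; simp
  have h2S : p2 ∈ S := by rw [hS]; simp
  have h3S : p3 ∈ S := by rw [hS]; simp
  have hne2 : det3 p1 p3 p2 ≠ 0 := gp_ne hgp h1S h3S h2S n13 n12 n23.symm
  have hneb : det3 p1 p3 b ≠ 0 := gp_ne hgp h1S h3S hbS n13 nb1.symm nb3.symm
  rcases lt_or_gt_of_ne hne2 with h2n | h2p
  · rcases lt_or_gt_of_ne hneb with hbn | hbp
    · exact case5B1 S a b p1 p2 p3 hS hgp nab na1 na2 na3 nb1 nb2 nb3 n12 n13 n23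
        hb1 hb2 hb3 h12 h23 h13 h2n hbn
    · exact case5C S a b p1 p2 p3 hS hgp nab na1 na2 na3 nb1 nb2 nb3 n12 n13 n23
        hb1 hb2 hb3 h12 h23 h13 h2n hbp
  · exact case5A S a b p1 p2 p3 hS hgp nab na1 na2 na3 nb1 nb2 nb3 n12 n13 n23
      hb1 hb2 hb3 h12 h23 h13 h2p


set_option maxHeartbeats 1000000 in
lemma case5 (c d e : Pt) (hS : S = {a, b, c, d, e}) (hgp : GenPos S)
    (nab : a ≠ b) (nac : a ≠ c) (nad : a ≠ d) (nae : a ≠ e)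
    (nbc : b ≠ c) (nbd : b ≠ d) (nbe : b ≠ e)
    (ncd : c ≠ d) (nce : c ≠ e) (nde : d ≠ e)
    (hc : 0 < det3 a b c) (hd : 0 < det3 a b d) (he : 0 < det3 a b e) :
    ∃ l₁ l₂ : List Pt, PlanePath S l₁ ∧ PlanePath S l₂ ∧ SharesExactly a b l₁ l₂ := by
  have haS : a ∈ S := by rw [hS]; simp
  have hcS : c ∈ S := by rw [hS]; simp
  have hdS : d ∈ S := by rw [hS]; simp
  have heS : e ∈ S := by rw [hS]; simp
  have hcd : det3 a c d ≠ 0 := gp_ne hgp haS hcS hdS nac nad ncd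
  have hce : det3 a c e ≠ 0 := gp_ne hgp haS hcS heS nac nae nce
  have hde : det3 a d e ≠ 0 := gp_ne hgp haS hdS heS nad nae nde
  have hswap : ∀ x y : Pt, det3 a x y = - det3 a y x := by
    intro x y; unfold det3; ring
  rcases lt_or_gt_of_ne hcd with scd | scd <;>
    rcases lt_or_gt_of_ne hce with sce | sce <;>
      rcases lt_or_gt_of_ne hde with sde | sde
  -- signs (det3 a c d, det3 a c e, det3 a d e)
  · -- (-,-,-) : order e, d, c
    refine case5sorted S a b e d c ?_ hgp nab nae nad nac nbe nbd nbc nde.symm nce.symm ncd.symm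
      he hd hc ?_ ?_ ?_
    · rw [hS]; ext x; simp; tauto
    · rw [hswap]; linarith
    · rw [hswap]; linarith
    · rw [hswap]; linarith
  · -- (-,-,+) : d < c, e < c, d < e : order d, e, c
    refine case5sorted S a b d e c ?_ hgp nab nad nae nac nbd nbe nbc nde ncd.symm nce.symm
      hd he hc ?_ ?_ ?_
    · rw [hS]; ext x; simp; tauto
    · exact sde
    · rw [hswap]; linarith
    · rw [hswap]; linarith
  · -- (-,+,-) : d < c, c < e, e < d : cycle, contradiction
    exfalso
    have h2' : 0 < det3 a e d := by rw [hswap]; linarith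
    have := det3_trans hc he hd sce h2'
    linarith
  · -- (-,+,+) : d < c, c < e, d < e : order d, c, e
    refine case5sorted S a b d c e ?_ hgp nab nad nac nae nbd nbc nbe ncd.symm nde nce
      hd hc he ?_ ?_ ?_
    · rw [hS]; ext x; simp; tauto
    · rw [hswap]; linarith
    · exact sce
    · exact sde
  · -- (+,-,-) : c < d, e < c, e < d : order e, c, d
    refine case5sorted S a b e c d ?_ hgp nab nae nac nad nbe nbc nbd nce.symm nde.symm ncd
      he hc hd ?_ ?_ ?_
    · rw [hS]; ext x; simp; tauto
    · rw [hswap]; linarith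
    · exact scd
    · rw [hswap]; linarith
  · -- (+,-,+) : c < d, e < c, d < e : cycle, contradiction
    exfalso
    have := det3_trans hc hd he scd sde
    linarith
  · -- (+,+,-) : c < d, c < e, e < d : order c, e, d
    refine case5sorted S a b c e d ?_ hgp nab nac nae nad nbc nbe nbd nce ncd nde.symm
      hc he hd ?_ ?_ ?_
    · rw [hS]; ext x; simp; tauto
    · exact sce
    · rw [hswap]; linarith
    · exact scd
  · -- (+,+,+) : order c, d, e
    exact case5sorted S a b c d e hS hgp nab nac nad nae nbc nbd nbe ncd nce nde
      hc hd he scd sde sce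


end Case5

lemma mainPos (S : Finset Pt) (hgp : GenPos S) (a b : Pt) (ha : a ∈ S) (hb : b ∈ S)
    (hab : a ≠ b)
    (hpos : ∀ p ∈ S, p ≠ a → p ≠ b → 0 < det3 a b p)
    (hT : (S.filter fun p => 0 < det3 a b p).card = 2 ∨
          (S.filter fun p => 0 < det3 a b p).card = 3) :
    ∃ l₁ l₂ : List Pt, PlanePath S l₁ ∧ PlanePath S l₂ ∧ SharesExactly a b l₁ l₂ := by
  classical
  set T := S.filter fun p => 0 < det3 a b p with hTdef
  have haT : a ∉ T := by simp [hTdef, Finset.mem_filter, det3_aba]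
  have hbT : b ∉ T := by simp [hTdef, Finset.mem_filter, det3_abb]
  have hmem : ∀ p ∈ T, p ∈ S ∧ 0 < det3 a b p := by
    intro p hp; exact Finset.mem_filter.1 hp
  have hSu : ∀ x ∈ S, x = a ∨ x = b ∨ x ∈ T := by
    intro x hx
    by_cases hxa : x = a
    · exact Or.inl hxa
    by_cases hxb : x = b
    · exact Or.inr (Or.inl hxb)
    · exact Or.inr (Or.inr (Finset.mem_filter.2 ⟨hx, hpos x hx hxa hxb⟩))
  rcases hT with h2 | h3
  · obtain ⟨c, d, hcd, hTeq⟩ := Finset.card_eq_two.1 h2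
    have hcT : c ∈ T := by rw [hTeq]; simp
    have hdT : d ∈ T := by rw [hTeq]; simp
    have hS : S = {a, b, c, d} := by
      ext x
      simp only [Finset.mem_insert, Finset.mem_singleton]
      constructor
      · intro hx
        rcases hSu x hx with rfl | rfl | hxT
        · tauto
        · tauto
        · rw [hTeq] at hxT; simp at hxT; tauto
      · rintro (h | h | h | h) <;> rw [h]
        · exact ha
        · exact hb
        · exact (hmem c hcT).1
        · exact (hmem d hdT).1
    exact case4 S a b c d hS hgp hab
      (fun h => haT (h ▸ hcT)) (fun h => haT (h ▸ hdT))
      (fun h => hbT (h ▸ hcT)) (fun h => hbT (h ▸ hdT)) hcd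
      (hmem c hcT).2 (hmem d hdT).2
  · obtain ⟨c, d, e, hcd, hce, hde, hTeq⟩ := Finset.card_eq_three.1 h3
    have hcT : c ∈ T := by rw [hTeq]; simp
    have hdT : d ∈ T := by rw [hTeq]; simp
    have heT : e ∈ T := by rw [hTeq]; simp
    have hS : S = {a, b, c, d, e} := by
      ext x
      simp only [Finset.mem_insert, Finset.mem_singleton]
      constructor
      · intro hx
        rcases hSu x hx with rfl | rfl | hxT
        · tauto
        · tauto
        · rw [hTeq] at hxT; simp at hxT; tauto
      · rintro (h | h | h | h | h) <;> rw [h]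
        · exact ha
        · exact hb
        · exact (hmem c hcT).1
        · exact (hmem d hdT).1
        · exact (hmem e heT).1
    exact case5 S a b c d e hS hgp hab
      (fun h => haT (h ▸ hcT)) (fun h => haT (h ▸ hdT)) (fun h => haT (h ▸ heT))
      (fun h => hbT (h ▸ hcT)) (fun h => hbT (h ▸ hdT)) (fun h => hbT (h ▸ heT))
      hcd hce hde
      (hmem c hcT).2 (hmem d hdT).2 (hmem e heT).2

/-- If `a, b` are consecutive hull vertices (all other points strictly on
one side of `ℓ(ab)`) and the open halfplane containing the other points contains exactly
2 or exactly 3 points of `S`, then there are two plane Hamiltonian paths on `S` whose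
common edge set is exactly the segment `ab`. -/
theorem stmt_12 (S : Finset Pt) (hgp : GenPos S)
    (a b : Pt) (ha : a ∈ S) (hb : b ∈ S) (hab : a ≠ b)
    (hedge : IsHullEdge S a b)
    (hcount :
      ((S.filter (fun p => det3 a b p < 0)).card = 0 ∧
        ((S.filter (fun p => 0 < det3 a b p)).card = 2 ∨
         (S.filter (fun p => 0 < det3 a b p)).card = 3)) ∨
      ((S.filter (fun p => 0 < det3 a b p)).card = 0 ∧
        ((S.filter (fun p => det3 a b p < 0)).card = 2 ∨
         (S.filter (fun p => det3 a b p < 0)).card = 3))) :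
    ∃ l₁ l₂ : List Pt, PlanePath S l₁ ∧ PlanePath S l₂ ∧ SharesExactly a b l₁ l₂ := by
  classical
  obtain ⟨-, -, -, hside⟩ := hedge
  rcases hside with hpos | hneg
  · have hnegempty : (S.filter (fun p => det3 a b p < 0)) = ∅ := by
      rw [Finset.filter_eq_empty_iff]
      intro p hp
      by_cases hpa : p = a
      · rw [hpa, det3_aba]; simp
      by_cases hpb : p = b
      · rw [hpb, det3_abb]; simp
      · have := hpos p hp hpa hpb; simp; linarith
    rcases hcount with ⟨-, h23⟩ | ⟨-, h23⟩
    · exact mainPos S hgp a b ha hb hab hpos h23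
    · rw [hnegempty] at h23; simp at h23
  · have hposempty : (S.filter (fun p => 0 < det3 a b p)) = ∅ := by
      rw [Finset.filter_eq_empty_iff]
      intro p hp
      by_cases hpa : p = a
      · rw [hpa, det3_aba]; simp
      by_cases hpb : p = b
      · rw [hpb, det3_abb]; simp
      · have := hneg p hp hpa hpb; simp; linarith
    have hfilter : (S.filter (fun p => det3 a b p < 0)) =
        (S.filter (fun p => 0 < det3 b a p)) := by
      apply Finset.filter_congr
      intro p _
      have e : det3 b a p = - det3 a b p := by unfold det3; ring
      rw [e]; constructor <;> intro h <;> linarith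
    have hposba : ∀ p ∈ S, p ≠ b → p ≠ a → 0 < det3 b a p := by
      intro p hp hpb hpa
      have := hneg p hp hpa hpb
      have e : det3 b a p = - det3 a b p := by unfold det3; ring
      rw [e]; linarith
    rcases hcount with ⟨-, h23⟩ | ⟨-, h23⟩
    · rw [hposempty] at h23; simp at h23
    · rw [hfilter] at h23
      obtain ⟨l₁, l₂, hp1, hp2, hs⟩ := mainPos S hgp b a hb ha hab.symm hposba h23
      refine ⟨l₁, l₂, hp1, hp2, hs.1.symm, hs.2.1.symm, ?_⟩
      · intro x y e1 e2
        exact (hs.2.2 x y e1 e2).trans (Set.pair_comm b a)
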